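/- Let U and V be Hermitian complex n×n matrices and T an arbitrary complex n×n matrix. Then |Tr[T U T* V]| ≤ Tr[T*T |U|] · σ₁(V), where σ₁(V) denotes the largest singular value of V. Symmetrically, |Tr[T U T* V]| ≤ σ₁(U) · Tr[T T* |V|]. -/

import Mathlib

open Matrix MeasureTheory
open scoped ComplexOrder ENNReal RealInnerProductSpace

/-- The modulus `|A| = (Aᴴ A)^(1/2)` of a complex matrix. -/
noncomputable def matAbs {n : ℕ} (A : Matrix (Fin n) (Fin n) ℂ) : Matrix (Fin n) (Fin n) ℂ :=
  ((Matrix.posSemidef_conjTranspose_mul_self A).1.eigenvectorUnitary : Matrix (Fin n) (Fin n) ℂ) *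
    Matrix.diagonal ((↑) ∘ (Real.sqrt ·) ∘ (Matrix.posSemidef_conjTranspose_mul_self A).1.eigenvalues) *
    (star ((Matrix.posSemidef_conjTranspose_mul_self A).1.eigenvectorUnitary : Matrix (Fin n) (Fin n) ℂ))

lemma matAbs_posSemidef {n : ℕ} (A : Matrix (Fin n) (Fin n) ℂ) : (matAbs A).PosSemidef :=
  Matrix.PosSemidef.mul_mul_conjTranspose_same
    (Matrix.posSemidef_diagonal_iff.mpr (by
      intro i
      simp only [Function.comp_apply]
      exact Complex.zero_le_real.mpr (Real.sqrt_nonneg _))) _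

/-- Singular values of a complex matrix: the eigenvalues of `|A|`. -/
noncomputable def singVals {n : ℕ} (A : Matrix (Fin n) (Fin n) ℂ) : Fin n → ℝ :=
  (matAbs_posSemidef A).1.eigenvalues

/-- Schatten `p`-norm for `p ∈ [1,∞]`: the `ℓᵖ` norm of the singular values. -/
noncomputable def schatten {n : ℕ} (p : ℝ≥0∞) (A : Matrix (Fin n) (Fin n) ℂ) : ℝ :=
  if p = ⊤ then ⨆ i, singVals A i
  else (∑ i, (singVals A i) ^ p.toReal) ^ (1 / p.toReal)

/-- Real power of a positive semidefinite matrix via its spectral decomposition. -/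
noncomputable def psdRpow {n : ℕ} {A : Matrix (Fin n) (Fin n) ℂ} (hA : A.PosSemidef) (r : ℝ) :
    Matrix (Fin n) (Fin n) ℂ :=
  (hA.1.eigenvectorUnitary : Matrix (Fin n) (Fin n) ℂ) *
    (Matrix.diagonal (fun i => ((hA.1.eigenvalues i ^ r : ℝ) : ℂ))) *
    (star (hA.1.eigenvectorUnitary : Matrix (Fin n) (Fin n) ℂ))

open scoped MatrixOrder in
lemma matAbs_eq_sqrt {n : ℕ} (A : Matrix (Fin n) (Fin n) ℂ) :
    matAbs A = CFC.sqrt (Aᴴ * A) := by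
  have h0 : 0 ≤ Aᴴ * A :=
    Matrix.nonneg_iff_posSemidef.mpr (Matrix.posSemidef_conjTranspose_mul_self A)
  rw [CFC.sqrt_eq_real_sqrt _ h0, cfcₙ_eq_cfc,
    (Matrix.posSemidef_conjTranspose_mul_self A).1.cfc_eq, Matrix.IsHermitian.cfc,
    Unitary.conjStarAlgAut_apply]
  rfl

open scoped MatrixOrder in
lemma matAbs_of_hermitian {n : ℕ} {A : Matrix (Fin n) (Fin n) ℂ} (hA : A.IsHermitian) :
    matAbs A = (hA.eigenvectorUnitary : Matrix (Fin n) (Fin n) ℂ) *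
      Matrix.diagonal (fun i => ((|hA.eigenvalues i| : ℝ) : ℂ)) *
      star (hA.eigenvectorUnitary : Matrix (Fin n) (Fin n) ℂ) := by
  set P := (hA.eigenvectorUnitary : Matrix (Fin n) (Fin n) ℂ) with hPdef
  have hP1 : star P * P = 1 := Matrix.mem_unitaryGroup_iff'.mp hA.eigenvectorUnitary.2
  have hP1' : ∀ X : Matrix (Fin n) (Fin n) ℂ, star P * (P * X) = X := fun X => by
    rw [← Matrix.mul_assoc, hP1, Matrix.one_mul]
  set D := Matrix.diagonal (fun i => ((|hA.eigenvalues i| : ℝ) : ℂ)) with hDdef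
  have hdpsd : D.PosSemidef := by
    rw [hDdef, Matrix.posSemidef_diagonal_iff]
    intro i
    exact_mod_cast abs_nonneg _
  have hW : (P * D * star P).PosSemidef := hdpsd.mul_mul_conjTranspose_same P
  have hspec : A = P * Matrix.diagonal (RCLike.ofReal ∘ hA.eigenvalues) * star P :=
    hA.spectral_theorem
  have hDD : D * D = Matrix.diagonal (RCLike.ofReal ∘ hA.eigenvalues) *
      Matrix.diagonal (RCLike.ofReal ∘ hA.eigenvalues) := by
    rw [hDdef, Matrix.diagonal_mul_diagonal, Matrix.diagonal_mul_diagonal]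
    apply congrArg
    funext i
    show ((|hA.eigenvalues i| : ℝ) : ℂ) * ((|hA.eigenvalues i| : ℝ) : ℂ) =
      ((hA.eigenvalues i : ℝ) : ℂ) * ((hA.eigenvalues i : ℝ) : ℂ)
    rw [← Complex.ofReal_mul, ← Complex.ofReal_mul, abs_mul_abs_self]
  have hsq : (P * D * star P) ^ 2 = Aᴴ * A := by
    rw [pow_two, show Aᴴ = A from hA]
    conv_rhs => rw [hspec]
    have hDD' : D * (D * star P) = Matrix.diagonal (RCLike.ofReal ∘ hA.eigenvalues) *
        (Matrix.diagonal (RCLike.ofReal ∘ hA.eigenvalues) * star P) := by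
      rw [← Matrix.mul_assoc, ← Matrix.mul_assoc, hDD]
    simp only [Matrix.mul_assoc, hP1', hDD']
  rw [matAbs_eq_sqrt]
  exact CFC.sqrt_unique (by rw [← pow_two]; exact hsq) (Matrix.nonneg_iff_posSemidef.mpr hW)

lemma abs_eigenvalue_le_sup {n : ℕ} {A : Matrix (Fin n) (Fin n) ℂ} (hA : A.IsHermitian)
    (j : Fin n) : |hA.eigenvalues j| ≤ ⨆ i, singVals A i := by
  have hconj : spectrum ℝ (matAbs A) =
      spectrum ℝ (Matrix.diagonal (fun i => ((|hA.eigenvalues i| : ℝ) : ℂ))) := by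
    rw [matAbs_of_hermitian hA]
    have := spectrum.units_conjugate (R := ℝ)
      (a := Matrix.diagonal (fun i => ((|hA.eigenvalues i| : ℝ) : ℂ)))
      (u := Unitary.toUnits hA.eigenvectorUnitary)
    simpa using this
  have hmem : |hA.eigenvalues j| ∈ spectrum ℝ (matAbs A) := by
    rw [hconj, spectrum.mem_iff]
    intro h
    rw [Matrix.isUnit_iff_isUnit_det, Matrix.algebraMap_eq_diagonal,
      Matrix.diagonal_sub, Matrix.det_diagonal] at h
    rw [Finset.prod_eq_zero (Finset.mem_univ j) (by simp [Pi.algebraMap_apply])] at h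
    simp at h
  rw [(matAbs_posSemidef A).1.spectrum_real_eq_range_eigenvalues] at hmem
  obtain ⟨k, hk⟩ := hmem
  exact hk ▸ le_ciSup (Set.Finite.bddAbove (Set.finite_range _)) k

lemma trace_mul_diag' {n : ℕ} (X : Matrix (Fin n) (Fin n) ℂ) (d : Fin n → ℂ) :
    (X * Matrix.diagonal d).trace = ∑ i, X i i * d i := by
  simp [Matrix.trace, Matrix.mul_diagonal, Matrix.diag]

lemma traceG1 {n : ℕ} (B : Matrix (Fin n) (Fin n) ℂ) (d e : Fin n → ℝ) :
    (B * Matrix.diagonal (fun i => ((d i : ℝ) : ℂ)) * Bᴴ *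
      Matrix.diagonal (fun j => ((e j : ℝ) : ℂ))).trace
      = ((∑ j, ∑ i, e j * d i * Complex.normSq (B j i) : ℝ) : ℂ) := by
  rw [trace_mul_diag']
  push_cast
  refine Finset.sum_congr rfl fun j _ => ?_
  rw [Matrix.mul_apply, Finset.sum_mul]
  refine Finset.sum_congr rfl fun i _ => ?_
  rw [Matrix.mul_diagonal, Matrix.conjTranspose_apply, ← Complex.mul_conj]
  rw [Complex.star_def]
  ring

lemma traceG2 {n : ℕ} (B : Matrix (Fin n) (Fin n) ℂ) (d : Fin n → ℝ) :
    (Bᴴ * B * Matrix.diagonal (fun i => ((d i : ℝ) : ℂ))).trace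
      = ((∑ i, d i * ∑ j, Complex.normSq (B j i) : ℝ) : ℂ) := by
  rw [trace_mul_diag']
  push_cast
  refine Finset.sum_congr rfl fun i _ => ?_
  rw [Matrix.mul_apply, Finset.mul_sum, Finset.sum_mul]
  refine Finset.sum_congr rfl fun j _ => ?_
  rw [Matrix.conjTranspose_apply, ← Complex.mul_conj]
  rw [Complex.star_def]
  ring

lemma traceG3 {n : ℕ} (B : Matrix (Fin n) (Fin n) ℂ) (d : Fin n → ℝ) :
    (B * Bᴴ * Matrix.diagonal (fun j => ((d j : ℝ) : ℂ))).trace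
      = ((∑ j, d j * ∑ i, Complex.normSq (B j i) : ℝ) : ℂ) := by
  rw [trace_mul_diag']
  push_cast
  refine Finset.sum_congr rfl fun j _ => ?_
  rw [Matrix.mul_apply, Finset.mul_sum, Finset.sum_mul]
  refine Finset.sum_congr rfl fun i _ => ?_
  rw [Matrix.conjTranspose_apply, ← Complex.mul_conj]
  rw [Complex.star_def]
  ring

/-- endpoint trace inequalities
`|Tr[T U T* V]| ≤ Tr[T*T |U|] · σ₁(V)` and `|Tr[T U T* V]| ≤ σ₁(U) · Tr[T T* |V|]`
for Hermitian `U, V` and arbitrary `T`. -/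
theorem trace_endpoint {n : ℕ} (U V T : Matrix (Fin n) (Fin n) ℂ)
    (hU : U.IsHermitian) (hV : V.IsHermitian) :
    ‖(T * U * Tᴴ * V).trace‖ ≤
        ((Tᴴ * T * matAbs U).trace).re * (⨆ i, singVals V i) ∧
    ‖(T * U * Tᴴ * V).trace‖ ≤
        (⨆ i, singVals U i) * ((T * Tᴴ * matAbs V).trace).re := by
  set P := (hU.eigenvectorUnitary : Matrix (Fin n) (Fin n) ℂ) with hPdef
  set Q := (hV.eigenvectorUnitary : Matrix (Fin n) (Fin n) ℂ) with hQdef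
  have hP1 : star P * P = 1 := Matrix.mem_unitaryGroup_iff'.mp hU.eigenvectorUnitary.2
  have hP2 : P * star P = 1 := Matrix.mem_unitaryGroup_iff.mp hU.eigenvectorUnitary.2
  have hQ1 : star Q * Q = 1 := Matrix.mem_unitaryGroup_iff'.mp hV.eigenvectorUnitary.2
  have hQ2 : Q * star Q = 1 := Matrix.mem_unitaryGroup_iff.mp hV.eigenvectorUnitary.2
  have hP2' : ∀ X : Matrix (Fin n) (Fin n) ℂ, P * (star P * X) = X := fun X => by
    rw [← Matrix.mul_assoc, hP2, Matrix.one_mul]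
  have hQ2' : ∀ X : Matrix (Fin n) (Fin n) ℂ, Q * (star Q * X) = X := fun X => by
    rw [← Matrix.mul_assoc, hQ2, Matrix.one_mul]
  set lam := hU.eigenvalues with hlamdef
  set mu := hV.eigenvalues with hmudef
  set B := star Q * T * P with hBdef
  set c : Fin n → Fin n → ℝ := fun j i => Complex.normSq (B j i) with hcdef
  have hcn : ∀ j i, 0 ≤ c j i := fun j i => Complex.normSq_nonneg _
  have hBH : Bᴴ = star P * Tᴴ * Q := by
    rw [hBdef]
    simp [Matrix.star_eq_conjTranspose, Matrix.conjTranspose_mul,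
      Matrix.conjTranspose_conjTranspose, Matrix.mul_assoc]
  have hUs : U = P * Matrix.diagonal (fun i => ((lam i : ℝ) : ℂ)) * star P :=
    hU.spectral_theorem
  have hVs : V = Q * Matrix.diagonal (fun j => ((mu j : ℝ) : ℂ)) * star Q :=
    hV.spectral_theorem
  -- identity 1
  have htr1 : (T * U * Tᴴ * V).trace = ((∑ j, ∑ i, mu j * lam i * c j i : ℝ) : ℂ) := by
    have hconj1 : star Q * (T * U * Tᴴ * V) * Q =
        B * Matrix.diagonal (fun i => ((lam i : ℝ) : ℂ)) * Bᴴ *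
          Matrix.diagonal (fun j => ((mu j : ℝ) : ℂ)) := by
      rw [hUs, hVs, hBH, hBdef]
      simp only [Matrix.mul_assoc, hQ1, Matrix.mul_one]
    calc (T * U * Tᴴ * V).trace
        = (star Q * (T * U * Tᴴ * V) * Q).trace := by
          rw [Matrix.trace_mul_cycle (star Q) (T * U * Tᴴ * V) Q, hQ2, Matrix.one_mul]
      _ = ((∑ j, ∑ i, mu j * lam i * c j i : ℝ) : ℂ) := by
          rw [hconj1, traceG1]
  -- identity 2
  have htr2 : ((Tᴴ * T * matAbs U).trace).re = ∑ i, |lam i| * ∑ j, c j i := by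
    have habs : matAbs U = P * Matrix.diagonal (fun i => ((|lam i| : ℝ) : ℂ)) * star P :=
      matAbs_of_hermitian hU
    have e1 : Tᴴ * T * (P * Matrix.diagonal (fun i => ((|lam i| : ℝ) : ℂ)) * star P)
        = (Tᴴ * (T * (P * Matrix.diagonal (fun i => ((|lam i| : ℝ) : ℂ))))) * star P := by
      simp only [Matrix.mul_assoc]
    have e2 : star P * (Tᴴ * (T * (P * Matrix.diagonal (fun i => ((|lam i| : ℝ) : ℂ)))))
        = Bᴴ * B * Matrix.diagonal (fun i => ((|lam i| : ℝ) : ℂ)) := by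
      rw [hBH, hBdef]
      simp only [Matrix.mul_assoc, hQ2']
    rw [habs, e1, Matrix.trace_mul_comm, e2, traceG2, Complex.ofReal_re]
  -- identity 3
  have htr3 : ((T * Tᴴ * matAbs V).trace).re = ∑ j, |mu j| * ∑ i, c j i := by
    have habs : matAbs V = Q * Matrix.diagonal (fun j => ((|mu j| : ℝ) : ℂ)) * star Q :=
      matAbs_of_hermitian hV
    have e1 : T * Tᴴ * (Q * Matrix.diagonal (fun j => ((|mu j| : ℝ) : ℂ)) * star Q)
        = (T * (Tᴴ * (Q * Matrix.diagonal (fun j => ((|mu j| : ℝ) : ℂ))))) * star Q := by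
      simp only [Matrix.mul_assoc]
    have e2 : star Q * (T * (Tᴴ * (Q * Matrix.diagonal (fun j => ((|mu j| : ℝ) : ℂ)))))
        = B * Bᴴ * Matrix.diagonal (fun j => ((|mu j| : ℝ) : ℂ)) := by
      rw [hBdef, hBH]
      simp only [Matrix.mul_assoc, hP2']
    rw [habs, e1, Matrix.trace_mul_comm, e2, traceG3, Complex.ofReal_re]
  have hmuB : ∀ j, |mu j| ≤ ⨆ i, singVals V i := fun j => abs_eigenvalue_le_sup hV j
  have hlamB : ∀ i, |lam i| ≤ ⨆ i, singVals U i := fun i => abs_eigenvalue_le_sup hU i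
  constructor
  · rw [htr1, htr2, Complex.norm_real, Real.norm_eq_abs]
    calc |∑ j, ∑ i, mu j * lam i * c j i|
        ≤ ∑ j, ∑ i, |mu j * lam i * c j i| := by
          refine (Finset.abs_sum_le_sum_abs _ _).trans ?_
          exact Finset.sum_le_sum fun j _ => Finset.abs_sum_le_sum_abs _ _
      _ ≤ ∑ j, ∑ i, (⨆ i, singVals V i) * (|lam i| * c j i) := by
          refine Finset.sum_le_sum fun j _ => Finset.sum_le_sum fun i _ => ?_
          rw [abs_mul, abs_mul, abs_of_nonneg (hcn j i), mul_assoc]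
          exact mul_le_mul_of_nonneg_right (hmuB j)
            (mul_nonneg (abs_nonneg _) (hcn j i))
      _ = (∑ i, |lam i| * ∑ j, c j i) * (⨆ i, singVals V i) := by
          rw [Finset.sum_comm]
          simp only [Finset.mul_sum, Finset.sum_mul]
          exact Finset.sum_congr rfl fun i _ => Finset.sum_congr rfl fun j _ => by ring
  · rw [htr1, htr3, Complex.norm_real, Real.norm_eq_abs]
    calc |∑ j, ∑ i, mu j * lam i * c j i|
        ≤ ∑ j, ∑ i, |mu j * lam i * c j i| := by
          refine (Finset.abs_sum_le_sum_abs _ _).trans ?_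
          exact Finset.sum_le_sum fun j _ => Finset.abs_sum_le_sum_abs _ _
      _ ≤ ∑ j, ∑ i, (⨆ i, singVals U i) * (|mu j| * c j i) := by
          refine Finset.sum_le_sum fun j _ => Finset.sum_le_sum fun i _ => ?_
          rw [abs_mul, abs_mul, abs_of_nonneg (hcn j i)]
          have h' : |mu j| * |lam i| * c j i = |lam i| * (|mu j| * c j i) := by ring
          rw [h']
          exact mul_le_mul_of_nonneg_right (hlamB i)
            (mul_nonneg (abs_nonneg _) (hcn j i))
      _ = (⨆ i, singVals U i) * ∑ j, |mu j| * ∑ i, c j i := by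
          simp only [Finset.mul_sum]
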